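/- Let A be a commutative, finite-dimensional, semisimple Yetter-Drinfel'd Hopf algebra over K[G] (as in the context). For primitive idempotents e and e' of A, the following conditions are equivalent: (1) the linear functional a ↦ Σ η_e(a₍₁₎) η_{e'}(a₍₂₎) (convolution product of the characters η_e and η_{e'}) is a K-algebra homomorphism A → K; (2) Q_{e'}^⊥ ⊆ T_e; (3) |G|⁻¹ · Σ_{γ ∈ Ĝ} Σ_{g ∈ G} γ(g)⁻¹ · ((η_{e'} ∘ ψ_γ) ⊗ (η_e ∘ φ_g)) = η_{e'} ⊗ η_e in A* ⊗_K A*. -/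

import Mathlib

open TensorProduct

/-- A Yetter-Drinfel'd Hopf algebra over the group ring `K[G]` of a finite abelian group `G`,
encoded by the data `φ, ψ, Δ, ε, S`. -/
structure YetterDrinfeldHopf (K : Type*) [Field K] (G : Type*) [CommGroup G] [Fintype G]
    [Fintype (G →* Kˣ)] (A : Type*) [Ring A] [Algebra K A] where
  φ : G →* (A ≃ₐ[K] A)
  ψ : (G →* Kˣ) →* (A ≃ₐ[K] A)
  φψ_comm : ∀ (g : G) (γ : G →* Kˣ) (a : A), φ g (ψ γ a) = ψ γ (φ g a)
  Δ : A →ₗ[K] A ⊗[K] A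
  ε : A →ₐ[K] K
  coassoc : ∀ a : A,
    (TensorProduct.assoc K A A A) ((TensorProduct.map Δ LinearMap.id) (Δ a)) =
      (TensorProduct.map LinearMap.id Δ) (Δ a)
  counit_left : ∀ a : A,
    (TensorProduct.lid K A) ((TensorProduct.map ε.toLinearMap LinearMap.id) (Δ a)) = a
  counit_right : ∀ a : A,
    (TensorProduct.rid K A) ((TensorProduct.map LinearMap.id ε.toLinearMap) (Δ a)) = a
  Δ_one : Δ 1 = 1 ⊗ₜ[K] 1
  Δ_φ : ∀ (g : G) (a : A),
    Δ (φ g a) = (TensorProduct.map (φ g).toLinearMap (φ g).toLinearMap) (Δ a)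
  Δ_ψ : ∀ (γ : G →* Kˣ) (a : A),
    Δ (ψ γ a) = (TensorProduct.map (ψ γ).toLinearMap (ψ γ).toLinearMap) (Δ a)
  ε_φ : ∀ (g : G) (a : A), ε (φ g a) = ε a
  ε_ψ : ∀ (γ : G →* Kˣ) (a : A), ε (ψ γ a) = ε a
  /-- Braided multiplicativity of the coproduct:
  `Δ(ab) = |G|⁻¹ ∑_γ ∑_g γ(g)⁻¹ (a₍₁₎ φ_g(b₍₁₎)) ⊗ (ψ_γ(a₍₂₎) b₍₂₎)`. -/
  Δ_mul : ∀ a b : A,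
    Δ (a * b) = (Fintype.card G : K)⁻¹ •
      ∑ γ : G →* Kˣ, ∑ g : G, ((γ g : K))⁻¹ •
        (TensorProduct.map (LinearMap.mul' K A) (LinearMap.mul' K A))
          ((TensorProduct.map
              (TensorProduct.map LinearMap.id (φ g).toLinearMap)
              (TensorProduct.map (ψ γ).toLinearMap LinearMap.id))
            ((TensorProduct.tensorTensorTensorComm K A A A A) (Δ a ⊗ₜ[K] Δ b)))
  S : A →ₗ[K] A
  S_φ : ∀ (g : G) (a : A), S (φ g a) = φ g (S a)
  S_ψ : ∀ (γ : G →* Kˣ) (a : A), S (ψ γ a) = ψ γ (S a)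
  antipode_left : ∀ a : A,
    (LinearMap.mul' K A) ((TensorProduct.map S LinearMap.id) (Δ a)) = algebraMap K A (ε a)
  antipode_right : ∀ a : A,
    (LinearMap.mul' K A) ((TensorProduct.map LinearMap.id S) (Δ a)) = algebraMap K A (ε a)

/-- A primitive idempotent: a nonzero idempotent that cannot be written as the sum of two
nonzero orthogonal idempotents. -/
def IsPrimitiveIdempotent {A : Type*} [Ring A] (e : A) : Prop :=
  e ≠ 0 ∧ IsIdempotentElem e ∧
    ∀ f f' : A, IsIdempotentElem f → IsIdempotentElem f' → f * f' = 0 → e = f + f' →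
      f = 0 ∨ f' = 0

set_option linter.unusedSectionVars false
set_option maxHeartbeats 1000000
set_option synthInstance.maxHeartbeats 400000
namespace YDaux


variable (K : Type*) [Field K] [IsAlgClosed K] [CharZero K]

lemma hasEnough (H : Type*) [CommGroup H] [Finite H] :
    HasEnoughRootsOfUnity K (Monoid.exponent H) := by
  haveI : NeZero ((Monoid.exponent H : K)) :=
    ⟨Nat.cast_ne_zero.mpr Monoid.exponent_ne_zero_of_finite⟩
  infer_instance

lemma cardHom (H : Type*) [CommGroup H] [Finite H] :
    Nat.card (H →* Kˣ) = Nat.card H := by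
  haveI := hasEnough K H
  exact Nat.card_congr (CommGroup.monoidHom_mulEquiv_of_hasEnoughRootsOfUnity H K).some.toEquiv

lemma finiteHom (H : Type*) [CommGroup H] [Finite H] : Finite (H →* Kˣ) := by
  haveI := hasEnough K H
  exact Finite.of_equiv H
    (CommGroup.monoidHom_mulEquiv_of_hasEnoughRootsOfUnity H K).some.toEquiv.symm

lemma sep {H : Type*} [CommGroup H] [Finite H] {a : H} (ha : a ≠ 1) :
    ∃ γ : H →* Kˣ, γ a ≠ 1 := by
  haveI := hasEnough K H
  exact CommGroup.exists_apply_ne_one_of_hasEnoughRootsOfUnity H K ha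

/-- The annihilator of a subgroup in the character group. -/
def annih {H : Type*} [CommGroup H] (N : Subgroup H) : Subgroup (H →* Kˣ) where
  carrier := {γ | ∀ h ∈ N, γ h = 1}
  one_mem' := fun h _ => rfl
  mul_mem' := by
    intro γ δ hγ hδ h hh
    simp only [MonoidHom.mul_apply, hγ h hh, hδ h hh, mul_one]
  inv_mem' := by
    intro γ hγ h hh
    simp only [MonoidHom.inv_apply, hγ h hh, inv_one]

lemma mem_annih {H : Type*} [CommGroup H] (N : Subgroup H) (γ : H →* Kˣ) :
    γ ∈ annih K N ↔ ∀ h ∈ N, γ h = 1 := Iff.rfl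

noncomputable def annihEquiv {H : Type*} [CommGroup H] (N : Subgroup H) :
    annih K N ≃ (H ⧸ N →* Kˣ) where
  toFun γ := QuotientGroup.lift N γ.1 (fun h hh => γ.2 h hh)
  invFun χ := ⟨χ.comp (QuotientGroup.mk' N), by
    intro h hh
    simp only [MonoidHom.comp_apply]
    rw [show (QuotientGroup.mk' N) h = 1 from (QuotientGroup.eq_one_iff h).mpr hh, map_one]⟩
  left_inv γ := by
    apply Subtype.ext
    apply MonoidHom.ext
    intro h
    simp [QuotientGroup.lift_mk']
    rfl
  right_inv χ := by
    apply QuotientGroup.monoidHom_ext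
    apply MonoidHom.ext
    intro h
    simp [QuotientGroup.lift_mk']
    rfl

lemma annih_card {H : Type*} [CommGroup H] [Finite H] (N : Subgroup H) :
    Nat.card (annih K N) * Nat.card N = Nat.card H := by
  rw [Nat.card_congr (annihEquiv K N), cardHom K (H ⧸ N)]
  exact (Subgroup.card_eq_card_quotient_mul_card_subgroup N).symm

/-- Evaluation homomorphism into the double dual. -/
def ev (H : Type*) [CommGroup H] : H →* ((H →* Kˣ) →* Kˣ) where
  toFun h :=
    { toFun := fun γ => γ h
      map_one' := rfl
      map_mul' := fun γ δ => rfl }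
  map_one' := by ext γ; simp
  map_mul' a b := by ext γ; simp

@[simp] lemma ev_apply {H : Type*} [CommGroup H] (h : H) (γ : H →* Kˣ) :
    ev K H h γ = γ h := rfl

lemma ev_bijective (H : Type*) [CommGroup H] [Finite H] :
    Function.Bijective (ev K H) := by
  haveI : Finite (H →* Kˣ) := finiteHom K H
  haveI : Finite ((H →* Kˣ) →* Kˣ) := finiteHom K (H →* Kˣ)
  rw [Nat.bijective_iff_injective_and_card]
  constructor
  · intro a b hab
    by_contra hne
    have hne1 : a * b⁻¹ ≠ 1 := by
      intro h; exact hne (by rwa [mul_inv_eq_one] at h)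
    obtain ⟨γ, hγ⟩ := sep K hne1
    apply hγ
    have : γ a = γ b := by
      have := DFunLike.congr_fun hab γ
      simpa using this
    rw [map_mul, map_inv, this, mul_inv_cancel]
  · rw [cardHom K (H →* Kˣ), cardHom K H]


section Perp

variable (K : Type*) [Field K] [IsAlgClosed K] [CharZero K]
variable (G : Type*) [CommGroup G] [Finite G]

/-- The "perp" of a subgroup of the character group, inside `G`. -/
def perp (Q : Subgroup (G →* Kˣ)) : Subgroup G :=
  Subgroup.comap (ev K G) (annih K Q)

lemma mem_perp (Q : Subgroup (G →* Kˣ)) (g : G) :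
    g ∈ perp K G Q ↔ ∀ γ ∈ Q, γ g = 1 := Iff.rfl

lemma perp_card (Q : Subgroup (G →* Kˣ)) :
    Nat.card (perp K G Q) * Nat.card Q = Nat.card G := by
  haveI : Finite (G →* Kˣ) := finiteHom K G
  have h1 : Nat.card (perp K G Q) = Nat.card (annih K Q) := by
    refine Nat.card_congr ((Equiv.ofBijective _ (ev_bijective K G)).subtypeEquiv ?_)
    intro g
    exact Iff.rfl
  rw [h1, annih_card K Q, cardHom K G]

lemma perp_perp (Q : Subgroup (G →* Kˣ)) (γ : G →* Kˣ)
    (hγ : ∀ g ∈ perp K G Q, γ g = 1) : γ ∈ Q := by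
  haveI : Finite (G →* Kˣ) := finiteHom K G
  have h1 : Nat.card (annih K (perp K G Q)) * Nat.card (perp K G Q) = Nat.card G :=
    annih_card K (perp K G Q)
  have h2 := perp_card K G Q
  have hle : (Q : Set (G →* Kˣ)) ⊆ (annih K (perp K G Q) : Set (G →* Kˣ)) := by
    intro δ hδ g hg
    exact hg δ hδ
  have hpos : 0 < Nat.card (perp K G Q) := Nat.card_pos
  have hcard : Nat.card (annih K (perp K G Q)) = Nat.card Q := by
    have : Nat.card (annih K (perp K G Q)) * Nat.card (perp K G Q)
        = Nat.card Q * Nat.card (perp K G Q) := by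
      rw [h1, mul_comm (Nat.card Q), h2]
    exact Nat.eq_of_mul_eq_mul_right hpos this
  have hQ : (Q : Set (G →* Kˣ)) = (annih K (perp K G Q) : Set (G →* Kˣ)) := by
    apply Set.eq_of_subset_of_ncard_le hle
    rw [← Nat.card_coe_set_eq, ← Nat.card_coe_set_eq]
    simp only [SetLike.coe_sort_coe]
    rw [hcard]
  have : γ ∈ annih K (perp K G Q) := fun g hg => hγ g hg
  rw [← SetLike.mem_coe, hQ]
  exact this

end Perp


lemma filter_char_sum {H : Type*} [CommGroup H] [Fintype H] {K : Type*} [Field K]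
    (S : Finset H) (hmul : ∀ a ∈ S, ∀ b ∈ S, a * b ∈ S) (hinv : ∀ a ∈ S, a⁻¹ ∈ S)
    (f : H →* Kˣ) [Decidable (∀ h ∈ S, f h = 1)] :
    ∑ h ∈ S, ((f h : K))⁻¹ = if ∀ h ∈ S, f h = 1 then (S.card : K) else 0 := by
  classical
  split_ifs with hall
  · rw [Finset.sum_congr rfl (fun h hh => by rw [hall h hh, Units.val_one, inv_one])]
    simp
  · push_neg at hall
    obtain ⟨δ, hδS, hδ1⟩ := hall
    have hre : ∑ h ∈ S, ((f (δ * h) : K))⁻¹ = ∑ h ∈ S, ((f h : K))⁻¹ := by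
      refine Finset.sum_nbij' (fun a => δ * a) (fun a => δ⁻¹ * a) ?_ ?_ ?_ ?_ ?_
      · intro a ha; exact hmul δ hδS a ha
      · intro a ha; exact hmul δ⁻¹ (hinv δ hδS) a ha
      · intro a _; simp
      · intro a _; simp
      · intro a _; rfl
    have hfac : ∑ h ∈ S, ((f (δ * h) : K))⁻¹
        = ((f δ : K))⁻¹ * ∑ h ∈ S, ((f h : K))⁻¹ := by
      rw [Finset.mul_sum]
      refine Finset.sum_congr rfl fun h _ => ?_
      rw [map_mul, Units.val_mul, mul_inv]
    have hkey : (((f δ : K))⁻¹ - 1) * ∑ h ∈ S, ((f h : K))⁻¹ = 0 := by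
      rw [sub_mul, one_mul, ← hfac, hre, sub_self]
    rcases mul_eq_zero.mp hkey with h | h
    · exfalso
      apply hδ1
      have h1 : ((f δ : K))⁻¹ = 1 := sub_eq_zero.mp h
      have h2 : ((f δ : K)) = 1 := by rwa [inv_eq_one] at h1
      exact Units.ext h2
    · exact h

section Idem

variable {K A : Type*} [Field K] [CommRing A] [Algebra K A]

lemma prim_orth {e f : A} (he : IsPrimitiveIdempotent e) (hf : IsPrimitiveIdempotent f)
    (hne : e ≠ f) : e * f = 0 := by
  obtain ⟨he0, heI, heP⟩ := he
  obtain ⟨hf0, hfI, hfP⟩ := hf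
  have hef : IsIdempotentElem (e * f) := heI.mul_of_commute (Commute.all e f) hfI
  have he1f : IsIdempotentElem (e * (1 - f)) :=
    heI.mul_of_commute (Commute.all e (1 - f)) hfI.one_sub
  have hsplit : e = e * f + e * (1 - f) := by ring
  have hf1f : f * (1 - f) = 0 := by
    rw [mul_sub, mul_one, hfI, sub_self]
  have horth : (e * f) * (e * (1 - f)) = 0 := by
    rw [mul_mul_mul_comm, heI, hf1f, mul_zero]
  rcases heP _ _ hef he1f horth hsplit with h | h
  · exact h
  · exfalso
    have hef_e : e = e * f := by
      have h2 := hsplit; rw [h, add_zero] at h2; exact h2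
    have hfe : IsIdempotentElem (f * e) := hfI.mul_of_commute (Commute.all f e) heI
    have hf1e : IsIdempotentElem (f * (1 - e)) :=
      hfI.mul_of_commute (Commute.all f (1 - e)) heI.one_sub
    have hsplit' : f = f * e + f * (1 - e) := by ring
    have he1e : e * (1 - e) = 0 := by
      rw [mul_sub, mul_one, heI, sub_self]
    have horth' : (f * e) * (f * (1 - e)) = 0 := by
      rw [mul_mul_mul_comm, hfI, he1e, mul_zero]
    rcases hfP _ _ hfe hf1e horth' hsplit' with h' | h'
    · apply he0
      rw [hef_e, mul_comm, h']
    · apply hne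
      have hfe_f : f = f * e := by
        have h2 := hsplit'; rw [h', add_zero] at h2; exact h2
      calc e = e * f := hef_e
        _ = f * e := mul_comm e f
        _ = f := hfe_f.symm

lemma char_idem_val (η : A →ₐ[K] K) {f : A} (hf : IsIdempotentElem f) :
    η f = 0 ∨ η f = 1 := by
  have h : IsIdempotentElem (η f) := by
    unfold IsIdempotentElem
    rw [← map_mul, hf]
  exact IsIdempotentElem.iff_eq_zero_or_one.mp h

lemma char_prim_val (η : A →ₐ[K] K) {e f : A} (he : IsPrimitiveIdempotent e)
    (hη : η e = 1) (hf : IsPrimitiveIdempotent f) [Decidable (f = e)] :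
    η f = if f = e then 1 else 0 := by
  split_ifs with h
  · rw [h, hη]
  · have h2 : η (f * e) = 0 := by rw [prim_orth hf he h, map_zero]
    rw [map_mul, hη, mul_one] at h2
    exact h2

lemma aut_prim (σ : A ≃ₐ[K] A) {e : A} (he : IsPrimitiveIdempotent e) :
    IsPrimitiveIdempotent (σ e) := by
  obtain ⟨he0, heI, heP⟩ := he
  refine ⟨fun h => he0 ?_, ?_, ?_⟩
  · have := congrArg σ.symm h
    simpa using this
  · unfold IsIdempotentElem
    rw [← map_mul, heI]
  · intro f f' hf hf' hff' hsum
    have h1 : IsIdempotentElem (σ.symm f) := by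
      unfold IsIdempotentElem; rw [← map_mul, hf]
    have h2 : IsIdempotentElem (σ.symm f') := by
      unfold IsIdempotentElem; rw [← map_mul, hf']
    have h3 : σ.symm f * σ.symm f' = 0 := by
      rw [← map_mul, hff', map_zero]
    have h4 : e = σ.symm f + σ.symm f' := by
      have := congrArg σ.symm hsum
      simpa using this
    rcases heP _ _ h1 h2 h3 h4 with h | h
    · left
      have := congrArg σ h
      simpa using this
    · right
      have := congrArg σ h
      simpa using this

lemma char_eq_of_prim [IsSemisimpleRing A] {e : A} (he : IsPrimitiveIdempotent e)
    (χ₁ χ₂ : A →ₐ[K] K) (h1 : χ₁ e = 1) (h2 : χ₂ e = 1) : χ₁ = χ₂ := by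
  obtain ⟨he0, heI, heP⟩ := he
  set m : Ideal A := RingHom.ker (χ₁ : A →+* K) with hm
  obtain ⟨J, hJ⟩ := ComplementedLattice.exists_isCompl m
  have h1mem : (1 : A) ∈ m ⊔ J := by rw [hJ.sup_eq_top]; trivial
  obtain ⟨x, hx, u, hu, hxu⟩ := Submodule.mem_sup.mp h1mem
  have hann : ∀ y ∈ m, y * u = 0 := by
    intro y hy
    have hyJ : y * u ∈ J := by
      have := J.smul_mem y hu
      simpa [smul_eq_mul] using this
    have hym : y * u ∈ m := by
      have hyy : y * u = y - y * x := by
        have h3 : y * (x + u) = y := by rw [hxu, mul_one]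
        linear_combination h3
      rw [hyy]
      exact Submodule.sub_mem m hy (by
        have := m.smul_mem y hx
        simpa [smul_eq_mul] using this)
    have : y * u ∈ m ⊓ J := ⟨hym, hyJ⟩
    rwa [hJ.inf_eq_bot] at this
  have hxm : χ₁ x = 0 := hx
  have hχu : χ₁ u = 1 := by
    have h3 := congrArg χ₁ hxu
    rw [map_add, hxm, zero_add, map_one] at h3
    exact h3
  have hxu' : x * u = 0 := hann x hx
  have huI : IsIdempotentElem u := by
    unfold IsIdempotentElem
    have h3 : (x + u) * u = u := by rw [hxu, one_mul]
    rw [add_mul, hxu'] at h3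
    simpa using h3
  have hxI : IsIdempotentElem x := by
    unfold IsIdempotentElem
    have h3 : x * (x + u) = x := by rw [hxu, mul_one]
    rw [mul_add, hxu'] at h3
    simpa using h3
  have heu : IsIdempotentElem (e * u) := heI.mul_of_commute (Commute.all e u) huI
  have hex : IsIdempotentElem (e * x) := heI.mul_of_commute (Commute.all e x) hxI
  have hsplit : e = e * u + e * x := by
    have h3 : e * (x + u) = e := by rw [hxu, mul_one]
    linear_combination -h3
  have horth : (e * u) * (e * x) = 0 := by
    rw [mul_mul_mul_comm, heI, mul_comm u x, hxu', mul_zero]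
  rcases heP _ _ heu hex horth hsplit with h | h
  · exfalso
    have h3 : χ₁ (e * u) = 1 := by rw [map_mul, h1, hχu, one_mul]
    rw [h, map_zero] at h3
    exact zero_ne_one h3
  · have hχ2x : χ₂ x = 0 := by
      have h3 : χ₂ (e * x) = 0 := by rw [h, map_zero]
      rw [map_mul, h2, one_mul] at h3
      exact h3
    have hχ2m : ∀ y ∈ m, χ₂ y = 0 := by
      intro y hy
      have hyu : y * u = 0 := hann y hy
      have h3 : y * (x + u) = y := by rw [hxu, mul_one]
      rw [mul_add, hyu, add_zero] at h3
      rw [← h3, map_mul, hχ2x, mul_zero]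
    apply AlgHom.ext
    intro a
    have hmem : a - algebraMap K A (χ₁ a) ∈ m := by
      have h3 : χ₁ (a - algebraMap K A (χ₁ a)) = 0 := by
        rw [map_sub, AlgHom.commutes]
        simp
      exact h3
    have h4 := hχ2m _ hmem
    rw [map_sub, AlgHom.commutes] at h4
    have h5 : χ₂ a - χ₁ a = 0 := by simpa using h4
    have h6 : χ₂ a = χ₁ a := sub_eq_zero.mp h5
    rw [h6]

end Idem



section Conv

variable {K : Type*} [Field K]

/-- Pairing of two functionals on a tensor product. -/
noncomputable def dpair {M N : Type*} [AddCommMonoid M] [AddCommMonoid N]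
    [Module K M] [Module K N] (f : M →ₗ[K] K) (g : N →ₗ[K] K) : M ⊗[K] N →ₗ[K] K :=
  LinearMap.mul' K K ∘ₗ TensorProduct.map f g

@[simp] lemma dpair_tmul {M N : Type*} [AddCommMonoid M] [AddCommMonoid N]
    [Module K M] [Module K N] (f : M →ₗ[K] K) (g : N →ₗ[K] K) (x : M) (y : N) :
    dpair f g (x ⊗ₜ[K] y) = f x * g y := by
  simp [dpair, LinearMap.mul'_apply]

lemma dpair_add_right {M N : Type*} [AddCommMonoid M] [AddCommMonoid N]
    [Module K M] [Module K N] (f : M →ₗ[K] K) (g₁ g₂ : N →ₗ[K] K) :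
    dpair f (g₁ + g₂) = dpair f g₁ + dpair f g₂ := by
  apply TensorProduct.ext'
  intro x y
  simp [mul_add]

lemma dpair_add_left {M N : Type*} [AddCommMonoid M] [AddCommMonoid N]
    [Module K M] [Module K N] (f₁ f₂ : M →ₗ[K] K) (g : N →ₗ[K] K) :
    dpair (f₁ + f₂) g = dpair f₁ g + dpair f₂ g := by
  apply TensorProduct.ext'
  intro x y
  simp [add_mul]

lemma dpair_smul_right {M N : Type*} [AddCommMonoid M] [AddCommMonoid N]
    [Module K M] [Module K N] (c : K) (f : M →ₗ[K] K) (g : N →ₗ[K] K) :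
    dpair f (c • g) = c • dpair f g := by
  apply TensorProduct.ext'
  intro x y
  simp [mul_left_comm, mul_comm]

lemma dpair_smul_left {M N : Type*} [AddCommMonoid M] [AddCommMonoid N]
    [Module K M] [Module K N] (c : K) (f : M →ₗ[K] K) (g : N →ₗ[K] K) :
    dpair (c • f) g = c • dpair f g := by
  apply TensorProduct.ext'
  intro x y
  simp [mul_assoc]

variable {G : Type*} [CommGroup G] [Fintype G] [Fintype (G →* Kˣ)]
variable {A : Type*} [CommRing A] [Algebra K A]
variable (D : YetterDrinfeldHopf K G A)

/-- Convolution product of two functionals. -/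
noncomputable def conv (f g : A →ₗ[K] K) : A →ₗ[K] K := dpair f g ∘ₗ D.Δ

lemma conv_apply (f g : A →ₗ[K] K) (a : A) : conv D f g a = dpair f g (D.Δ a) := rfl

lemma conv_assoc (f g h : A →ₗ[K] K) :
    conv D (conv D f g) h = conv D f (conv D g h) := by
  have e1 : dpair (conv D f g) h
      = dpair (dpair f g) h ∘ₗ TensorProduct.map D.Δ LinearMap.id := by
    apply TensorProduct.ext'
    intro x y
    simp [conv_apply]
  have e2 : dpair f (conv D g h)
      = dpair f (dpair g h) ∘ₗ TensorProduct.map LinearMap.id D.Δ := by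
    apply TensorProduct.ext'
    intro x y
    simp [conv_apply]
  have e3 : dpair (dpair f g) h
      = dpair f (dpair g h) ∘ₗ (TensorProduct.assoc K A A A).toLinearMap := by
    apply TensorProduct.ext_threefold
    intro x y z
    simp [mul_assoc]
  apply LinearMap.ext
  intro a
  rw [conv_apply, conv_apply, e1, e2, e3]
  simp only [LinearMap.comp_apply, LinearEquiv.coe_toLinearMap]
  rw [← D.coassoc a]

lemma conv_eps_left (f : A →ₗ[K] K) : conv D D.ε.toLinearMap f = f := by
  have e1 : dpair (D.ε.toLinearMap) f
      = f ∘ₗ (TensorProduct.lid K A).toLinearMap ∘ₗ TensorProduct.map D.ε.toLinearMap LinearMap.id := by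
    apply TensorProduct.ext'
    intro x y
    simp [smul_eq_mul]
  apply LinearMap.ext
  intro a
  rw [conv_apply, e1]
  simp only [LinearMap.comp_apply, LinearEquiv.coe_toLinearMap]
  rw [D.counit_left a]

lemma conv_eps_right (f : A →ₗ[K] K) : conv D f D.ε.toLinearMap = f := by
  have e1 : dpair f (D.ε.toLinearMap)
      = f ∘ₗ (TensorProduct.rid K A).toLinearMap ∘ₗ TensorProduct.map LinearMap.id D.ε.toLinearMap := by
    apply TensorProduct.ext'
    intro x y
    simp [smul_eq_mul, mul_comm]
  apply LinearMap.ext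
  intro a
  rw [conv_apply, e1]
  simp only [LinearMap.comp_apply, LinearEquiv.coe_toLinearMap]
  rw [D.counit_right a]

lemma conv_Sinv_left (χ : A →ₐ[K] K) :
    conv D (χ.toLinearMap ∘ₗ D.S) χ.toLinearMap = D.ε.toLinearMap := by
  have e1 : dpair (χ.toLinearMap ∘ₗ D.S) χ.toLinearMap
      = χ.toLinearMap ∘ₗ LinearMap.mul' K A ∘ₗ TensorProduct.map D.S LinearMap.id := by
    apply TensorProduct.ext'
    intro x y
    simp [LinearMap.mul'_apply]
  apply LinearMap.ext
  intro a
  rw [conv_apply, e1]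
  simp only [LinearMap.comp_apply]
  rw [D.antipode_left a]
  simp [AlgHom.commutes]

lemma conv_Sinv_right (χ : A →ₐ[K] K) :
    conv D χ.toLinearMap (χ.toLinearMap ∘ₗ D.S) = D.ε.toLinearMap := by
  have e1 : dpair χ.toLinearMap (χ.toLinearMap ∘ₗ D.S)
      = χ.toLinearMap ∘ₗ LinearMap.mul' K A ∘ₗ TensorProduct.map LinearMap.id D.S := by
    apply TensorProduct.ext'
    intro x y
    simp [LinearMap.mul'_apply]
  apply LinearMap.ext
  intro a
  rw [conv_apply, e1]
  simp only [LinearMap.comp_apply]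
  rw [D.antipode_right a]
  simp [AlgHom.commutes]

lemma conv_cancel_left (χ : A →ₐ[K] K) (f : A →ₗ[K] K) :
    conv D (χ.toLinearMap ∘ₗ D.S) (conv D χ.toLinearMap f) = f := by
  rw [← conv_assoc, conv_Sinv_left, conv_eps_left]

lemma conv_cancel_right (χ : A →ₐ[K] K) (f : A →ₗ[K] K) :
    conv D (conv D f χ.toLinearMap) (χ.toLinearMap ∘ₗ D.S) = f := by
  rw [conv_assoc, conv_Sinv_right, conv_eps_right]

/-- Left convolution as a linear endomorphism of the dual. -/
noncomputable def convL (h : A →ₗ[K] K) : (A →ₗ[K] K) →ₗ[K] (A →ₗ[K] K) where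
  toFun f := conv D h f
  map_add' f₁ f₂ := by
    show conv D h (f₁ + f₂) = conv D h f₁ + conv D h f₂
    unfold conv
    rw [dpair_add_right, LinearMap.add_comp]
  map_smul' c f := by
    show conv D h (c • f) = c • conv D h f
    unfold conv
    rw [dpair_smul_right, LinearMap.smul_comp]

/-- Right convolution as a linear endomorphism of the dual. -/
noncomputable def convR (h : A →ₗ[K] K) : (A →ₗ[K] K) →ₗ[K] (A →ₗ[K] K) where
  toFun f := conv D f h
  map_add' f₁ f₂ := by
    show conv D (f₁ + f₂) h = conv D f₁ h + conv D f₂ h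
    unfold conv
    rw [dpair_add_left, LinearMap.add_comp]
  map_smul' c f := by
    show conv D (c • f) h = c • conv D f h
    unfold conv
    rw [dpair_smul_left, LinearMap.smul_comp]

@[simp] lemma convL_apply (h f : A →ₗ[K] K) : convL D h f = conv D h f := rfl
@[simp] lemma convR_apply (h f : A →ₗ[K] K) : convR D h f = conv D f h := rfl

end Conv

section DD

variable {K A : Type*} [Field K] [AddCommGroup A] [Module K A] [Module.Finite K A] [Module.Free K A]

lemma dualDistrib_injective :
    Function.Injective (TensorProduct.dualDistrib K A A) := by
  classical
  let b := Module.Free.chooseBasis K A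
  intro x y hxy
  have h := TensorProduct.dualDistrib_dualDistribInvOfBasis_right_inverse (R := K) b b
  have hx := LinearMap.congr_fun h x
  have hy := LinearMap.congr_fun h y
  simp only [LinearMap.comp_apply, LinearMap.id_apply] at hx hy
  rw [← hx, ← hy, hxy]

end DD


section PartI

variable {K : Type*} [Field K] [IsAlgClosed K] [CharZero K]
variable {G : Type*} [CommGroup G] [Fintype G] [Fintype (G →* Kˣ)]
variable {A : Type*} [CommRing A] [Algebra K A] [FiniteDimensional K A] [IsSemisimpleRing A]
variable (D : YetterDrinfeldHopf K G A)

lemma lid_eq_mul' (z : K ⊗[K] K) :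
    TensorProduct.lid K K z = LinearMap.mul' K K z := by
  induction z using TensorProduct.induction_on with
  | zero => simp
  | tmul x y => simp [LinearMap.mul'_apply, smul_eq_mul]
  | add z₁ z₂ ih₁ ih₂ => simp [ih₁, ih₂]

lemma conv_eq_lid (f g : A →ₗ[K] K) (a : A) :
    conv D f g a = TensorProduct.lid K K (TensorProduct.map f g (D.Δ a)) := by
  rw [lid_eq_mul']
  rfl

lemma pair_mul_expand (η η' : A →ₐ[K] K) (γ : G →* Kˣ) (g : G) (u v : A ⊗[K] A) :
    dpair η.toLinearMap η'.toLinearMap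
      ((TensorProduct.map (LinearMap.mul' K A) (LinearMap.mul' K A))
        ((TensorProduct.map (TensorProduct.map LinearMap.id (D.φ g).toLinearMap)
            (TensorProduct.map (D.ψ γ).toLinearMap LinearMap.id))
          ((TensorProduct.tensorTensorTensorComm K A A A A) (u ⊗ₜ[K] v)))) =
      dpair η.toLinearMap (η'.toLinearMap ∘ₗ (D.ψ γ).toLinearMap) u *
        dpair (η.toLinearMap ∘ₗ (D.φ g).toLinearMap) η'.toLinearMap v := by
  induction u using TensorProduct.induction_on with
  | zero => simp
  | tmul x₁ x₂ =>
    induction v using TensorProduct.induction_on with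
    | zero => simp
    | tmul y₁ y₂ =>
      simp only [TensorProduct.tensorTensorTensorComm_tmul, TensorProduct.map_tmul,
        LinearMap.mul'_apply, dpair_tmul, LinearMap.id_coe, id_eq, LinearMap.coe_comp,
        Function.comp_apply, AlgHom.toLinearMap_apply, AlgEquiv.toLinearMap_apply, map_mul]
      ring
    | add v₁ v₂ ih₁ ih₂ =>
      simp only [TensorProduct.tmul_add, map_add, ih₁, ih₂, mul_add]
  | add u₁ u₂ ih₁ ih₂ =>
    simp only [TensorProduct.add_tmul, map_add, ih₁, ih₂, add_mul]

lemma conv_mul_expand (η η' : A →ₐ[K] K) (a b : A) :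
    conv D η.toLinearMap η'.toLinearMap (a * b) =
      (Fintype.card G : K)⁻¹ * ∑ γ : G →* Kˣ, ∑ g : G, ((γ g : K))⁻¹ *
        (conv D η.toLinearMap (η'.toLinearMap ∘ₗ (D.ψ γ).toLinearMap) a *
          conv D (η.toLinearMap ∘ₗ (D.φ g).toLinearMap) η'.toLinearMap b) := by
  rw [conv_apply, D.Δ_mul a b, map_smul, map_sum, smul_eq_mul]
  congr 1
  refine Finset.sum_congr rfl fun γ _ => ?_
  rw [map_sum]
  refine Finset.sum_congr rfl fun g _ => ?_
  rw [map_smul, smul_eq_mul, pair_mul_expand]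
  rfl

lemma cond3_pointwise (η η' : A →ₐ[K] K)
    (h3 : (Fintype.card G : K)⁻¹ •
        ∑ γ : G →* Kˣ, ∑ g : G, ((γ g : K))⁻¹ •
          ((η'.toLinearMap ∘ₗ (D.ψ γ).toLinearMap) ⊗ₜ[K]
            (η.toLinearMap ∘ₗ (D.φ g).toLinearMap)) =
      η'.toLinearMap ⊗ₜ[K] η.toLinearMap) :
    ∀ x y : A, (Fintype.card G : K)⁻¹ * ∑ γ : G →* Kˣ, ∑ g : G, ((γ g : K))⁻¹ *
        (η' (D.ψ γ x) * η (D.φ g y)) = η' x * η y := by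
  intro x y
  have h := congrArg (TensorProduct.dualDistrib K A A) h3
  have h2 := LinearMap.congr_fun h (x ⊗ₜ[K] y)
  simpa only [map_smul, map_sum, LinearMap.smul_apply, LinearMap.sum_apply,
    TensorProduct.dualDistrib_apply, smul_eq_mul, LinearMap.coe_comp, Function.comp_apply,
    AlgHom.toLinearMap_apply, AlgEquiv.toLinearMap_apply] using h2

lemma pointwise_cond3 (η η' : A →ₐ[K] K)
    (hpt : ∀ x y : A, (Fintype.card G : K)⁻¹ * ∑ γ : G →* Kˣ, ∑ g : G, ((γ g : K))⁻¹ *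
        (η' (D.ψ γ x) * η (D.φ g y)) = η' x * η y) :
    (Fintype.card G : K)⁻¹ •
        ∑ γ : G →* Kˣ, ∑ g : G, ((γ g : K))⁻¹ •
          ((η'.toLinearMap ∘ₗ (D.ψ γ).toLinearMap) ⊗ₜ[K]
            (η.toLinearMap ∘ₗ (D.φ g).toLinearMap)) =
      η'.toLinearMap ⊗ₜ[K] η.toLinearMap := by
  apply dualDistrib_injective
  apply TensorProduct.ext'
  intro x y
  simp only [map_smul, map_sum, LinearMap.smul_apply, LinearMap.sum_apply,
    TensorProduct.dualDistrib_apply, smul_eq_mul, LinearMap.coe_comp, Function.comp_apply,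
    AlgHom.toLinearMap_apply, AlgEquiv.toLinearMap_apply]
  exact hpt x y

lemma cond1_to_cond3 (η η' : A →ₐ[K] K)
    (h1 : ∃ χ : A →ₐ[K] K, ∀ a : A, χ a =
        (TensorProduct.lid K K)
          ((TensorProduct.map η.toLinearMap η'.toLinearMap) (D.Δ a))) :
    (Fintype.card G : K)⁻¹ •
        ∑ γ : G →* Kˣ, ∑ g : G, ((γ g : K))⁻¹ •
          ((η'.toLinearMap ∘ₗ (D.ψ γ).toLinearMap) ⊗ₜ[K]
            (η.toLinearMap ∘ₗ (D.φ g).toLinearMap)) =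
      η'.toLinearMap ⊗ₜ[K] η.toLinearMap := by
  obtain ⟨χ₀, hχ₀⟩ := h1
  have hχ : ∀ a : A, χ₀ a = conv D η.toLinearMap η'.toLinearMap a := by
    intro a
    rw [hχ₀ a, ← conv_eq_lid]
  have hX : ((Fintype.card G : K)⁻¹ •
      ∑ γ : G →* Kˣ, ∑ g : G, ((γ g : K))⁻¹ •
        ((conv D η.toLinearMap (η'.toLinearMap ∘ₗ (D.ψ γ).toLinearMap)) ⊗ₜ[K]
          (conv D (η.toLinearMap ∘ₗ (D.φ g).toLinearMap) η'.toLinearMap)))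
      = (conv D η.toLinearMap η'.toLinearMap) ⊗ₜ[K] (conv D η.toLinearMap η'.toLinearMap) := by
    apply dualDistrib_injective
    apply TensorProduct.ext'
    intro a b
    simp only [map_smul, map_sum, LinearMap.smul_apply, LinearMap.sum_apply,
      TensorProduct.dualDistrib_apply, smul_eq_mul]
    rw [← conv_mul_expand, ← hχ, ← hχ, ← hχ, map_mul]
  have hM := congrArg (TensorProduct.map (convL D (η.toLinearMap ∘ₗ D.S))
      (convR D (η'.toLinearMap ∘ₗ D.S))) hX
  simpa only [map_smul, map_sum, TensorProduct.map_tmul, convL_apply, convR_apply,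
    conv_cancel_left, conv_cancel_right] using hM

lemma cond3_to_cond1 (η η' : A →ₐ[K] K)
    (h3 : (Fintype.card G : K)⁻¹ •
        ∑ γ : G →* Kˣ, ∑ g : G, ((γ g : K))⁻¹ •
          ((η'.toLinearMap ∘ₗ (D.ψ γ).toLinearMap) ⊗ₜ[K]
            (η.toLinearMap ∘ₗ (D.φ g).toLinearMap)) =
      η'.toLinearMap ⊗ₜ[K] η.toLinearMap) :
    ∃ χ : A →ₐ[K] K, ∀ a : A, χ a =
        (TensorProduct.lid K K)
          ((TensorProduct.map η.toLinearMap η'.toLinearMap) (D.Δ a)) := by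
  have hpt := cond3_pointwise D η η' h3
  have key : ∀ u v : A ⊗[K] A,
      (Fintype.card G : K)⁻¹ * ∑ γ : G →* Kˣ, ∑ g : G, ((γ g : K))⁻¹ *
        (dpair η.toLinearMap (η'.toLinearMap ∘ₗ (D.ψ γ).toLinearMap) u *
          dpair (η.toLinearMap ∘ₗ (D.φ g).toLinearMap) η'.toLinearMap v) =
      dpair η.toLinearMap η'.toLinearMap u * dpair η.toLinearMap η'.toLinearMap v := by
    intro u v
    induction u using TensorProduct.induction_on with
    | zero => simp
    | tmul x₁ x₂ =>
      induction v using TensorProduct.induction_on with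
      | zero => simp
      | tmul y₁ y₂ =>
        simp only [dpair_tmul, LinearMap.coe_comp, Function.comp_apply,
          AlgHom.toLinearMap_apply, AlgEquiv.toLinearMap_apply]
        have hre : ∀ (γ : G →* Kˣ) (g : G),
            ((γ g : K))⁻¹ * ((η x₁ * η' (D.ψ γ x₂)) * (η (D.φ g y₁) * η' y₂))
              = (η x₁ * η' y₂) * (((γ g : K))⁻¹ * (η' (D.ψ γ x₂) * η (D.φ g y₁))) := by
          intro γ g
          ring
        simp_rw [hre, ← Finset.mul_sum]
        rw [mul_left_comm, hpt x₂ y₁]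
        ring
      | add v₁ v₂ ih₁ ih₂ =>
        simp only [map_add, mul_add, Finset.sum_add_distrib]
        rw [ih₁, ih₂]
    | add u₁ u₂ ih₁ ih₂ =>
      simp only [map_add, add_mul, mul_add, Finset.sum_add_distrib]
      rw [ih₁, ih₂]
  have hmul : ∀ a b : A, conv D η.toLinearMap η'.toLinearMap (a * b) =
      conv D η.toLinearMap η'.toLinearMap a * conv D η.toLinearMap η'.toLinearMap b := by
    intro a b
    rw [conv_mul_expand]
    exact key (D.Δ a) (D.Δ b)
  have hone : conv D η.toLinearMap η'.toLinearMap 1 = 1 := by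
    rw [conv_apply, D.Δ_one]
    simp
  refine ⟨AlgHom.ofLinearMap (conv D η.toLinearMap η'.toLinearMap) hone hmul, fun a => ?_⟩
  show conv D η.toLinearMap η'.toLinearMap a = _
  rw [conv_eq_lid]

end PartI

section PartII

variable {K : Type*} [Field K] [IsAlgClosed K] [CharZero K]
variable {G : Type*} [CommGroup G] [Fintype G] [Fintype (G →* Kˣ)]
variable {A : Type*} [CommRing A] [Algebra K A] [FiniteDimensional K A] [IsSemisimpleRing A]
variable (D : YetterDrinfeldHopf K G A)

/-- The stabilizer of `e'` under `ψ`, as a subgroup of the character group. -/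
def Qsub (e' : A) : Subgroup (G →* Kˣ) where
  carrier := {γ | D.ψ γ e' = e'}
  one_mem' := by
    show D.ψ 1 e' = e'
    rw [map_one, AlgEquiv.one_apply]
  mul_mem' := by
    intro γ δ hγ hδ
    show D.ψ (γ * δ) e' = e'
    rw [map_mul, AlgEquiv.mul_apply]
    rw [show D.ψ δ e' = e' from hδ, show D.ψ γ e' = e' from hγ]
  inv_mem' := by
    intro γ hγ
    show D.ψ γ⁻¹ e' = e'
    have h := congrArg (D.ψ γ⁻¹) (show D.ψ γ e' = e' from hγ)
    rw [← AlgEquiv.mul_apply, ← map_mul,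
      show γ⁻¹ * γ = (1 : G →* Kˣ) from inv_mul_cancel γ, map_one, AlgEquiv.one_apply] at h
    exact h.symm

lemma mem_Qsub (e' : A) (γ : G →* Kˣ) : γ ∈ Qsub D e' ↔ D.ψ γ e' = e' := Iff.rfl

lemma cond3_to_cond2 {e e' : A} (he : IsPrimitiveIdempotent e) (he' : IsPrimitiveIdempotent e')
    (η η' : A →ₐ[K] K) (hη : η e = 1) (hη' : η' e' = 1)
    (h3 : (Fintype.card G : K)⁻¹ •
        ∑ γ : G →* Kˣ, ∑ g : G, ((γ g : K))⁻¹ •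
          ((η'.toLinearMap ∘ₗ (D.ψ γ).toLinearMap) ⊗ₜ[K]
            (η.toLinearMap ∘ₗ (D.φ g).toLinearMap)) =
      η'.toLinearMap ⊗ₜ[K] η.toLinearMap) :
    ∀ g : G, (∀ γ : G →* Kˣ, D.ψ γ e' = e' → γ g = 1) → D.φ g e = e := by
  classical
  have hpt := cond3_pointwise D η η' h3
  intro g₀ hg₀
  by_contra hn
  have h := hpt e' (D.φ g₀⁻¹ e)
  -- right-hand side is zero
  have hy : D.φ g₀⁻¹ e ≠ e := by
    intro hc
    apply hn
    have h2 := congrArg (D.φ g₀) hc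
    rw [← AlgEquiv.mul_apply, ← map_mul,
      show g₀ * g₀⁻¹ = (1 : G) from mul_inv_cancel g₀, map_one, AlgEquiv.one_apply] at h2
    exact h2.symm
  have hηy : η (D.φ g₀⁻¹ e) = 0 := by
    rw [char_prim_val η he hη (aut_prim (D.φ g₀⁻¹) he), if_neg hy]
  rw [hη', one_mul, hηy] at h
  -- compute the left-hand side
  have hv1 : ∀ γ : G →* Kˣ, η' (D.ψ γ e') = if D.ψ γ e' = e' then 1 else 0 := fun γ =>
    char_prim_val η' he' hη' (aut_prim (D.ψ γ) he')
  have hv2 : ∀ g : G, η (D.φ g (D.φ g₀⁻¹ e)) = if D.φ (g * g₀⁻¹) e = e then 1 else 0 := by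
    intro g
    rw [show D.φ g (D.φ g₀⁻¹ e) = D.φ (g * g₀⁻¹) e by rw [map_mul, AlgEquiv.mul_apply],
      char_prim_val η he hη (aut_prim _ he)]
  set Qfin : Finset (G →* Kˣ) := Finset.univ.filter (fun γ => D.ψ γ e' = e') with hQfin
  have hQmul : ∀ a ∈ Qfin, ∀ b ∈ Qfin, a * b ∈ Qfin := by
    intro a ha b hb
    simp only [hQfin, Finset.mem_filter, Finset.mem_univ, true_and] at *
    exact (mem_Qsub D e' (a * b)).mp (Subgroup.mul_mem _ ha hb)
  have hQinv : ∀ a ∈ Qfin, a⁻¹ ∈ Qfin := by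
    intro a ha
    simp only [hQfin, Finset.mem_filter, Finset.mem_univ, true_and] at *
    exact (mem_Qsub D e' a⁻¹).mp (Subgroup.inv_mem _ ha)
  -- inner sum over γ
  have hinner : ∀ g : G, (∑ γ : G →* Kˣ, ((γ g : K))⁻¹ * (η' (D.ψ γ e') * η (D.φ g (D.φ g₀⁻¹ e))))
      = (if D.φ (g * g₀⁻¹) e = e ∧ (∀ γ ∈ Qfin, γ g = 1) then (Qfin.card : K) else 0) := by
    intro g
    have e1 : ∀ γ : G →* Kˣ, ((γ g : K))⁻¹ * (η' (D.ψ γ e') * η (D.φ g (D.φ g₀⁻¹ e)))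
        = (if D.φ (g * g₀⁻¹) e = e then 1 else 0) * (if D.ψ γ e' = e' then ((γ g : K))⁻¹ else 0) := by
      intro γ
      rw [hv1 γ, hv2 g]
      by_cases h1 : D.ψ γ e' = e'
      · by_cases h2 : D.φ (g * g₀⁻¹) e = e
        · rw [if_pos h1, if_pos h2, if_pos h1]; ring
        · rw [if_pos h1, if_neg h2]; ring
      · by_cases h2 : D.φ (g * g₀⁻¹) e = e
        · rw [if_neg h1, if_pos h2, if_neg h1]; ring
        · rw [if_neg h1, if_neg h2]; ring
    rw [Finset.sum_congr rfl (fun γ _ => e1 γ), ← Finset.mul_sum]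
    have e2 : (∑ γ : G →* Kˣ, if D.ψ γ e' = e' then ((γ g : K))⁻¹ else 0)
        = ∑ γ ∈ Qfin, (((YDaux.ev K G g) γ : K))⁻¹ := by
      rw [hQfin, Finset.sum_filter]
      rfl
    rw [e2, filter_char_sum Qfin hQmul hQinv (YDaux.ev K G g)]
    by_cases h2 : ∀ γ ∈ Qfin, γ g = 1
    · by_cases h1 : D.φ (g * g₀⁻¹) e = e
      · rw [if_pos h1, if_pos (show ∀ γ ∈ Qfin, (YDaux.ev K G g) γ = 1 from h2),
          if_pos ⟨h1, h2⟩, one_mul]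
      · rw [if_neg h1, if_pos (show ∀ γ ∈ Qfin, (YDaux.ev K G g) γ = 1 from h2),
          if_neg (show ¬(D.φ (g * g₀⁻¹) e = e ∧ ∀ γ ∈ Qfin, γ g = 1) from fun hc => h1 hc.1),
          zero_mul]
    · rw [if_neg (show ¬(D.φ (g * g₀⁻¹) e = e ∧ ∀ γ ∈ Qfin, γ g = 1) from fun hc => h2 hc.2),
        if_neg (show ¬ ∀ γ ∈ Qfin, (YDaux.ev K G g) γ = 1 from h2), mul_zero]
  rw [Finset.sum_comm] at h
  rw [Finset.sum_congr rfl (fun g _ => hinner g)] at h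
  rw [Finset.sum_ite, Finset.sum_const_zero, add_zero, Finset.sum_const, nsmul_eq_mul] at h
  -- h : c⁻¹ * (N * Qcard) = 0 ; derive contradiction
  have hg₀mem : g₀ ∈ Finset.univ.filter
      (fun g => D.φ (g * g₀⁻¹) e = e ∧ ∀ γ ∈ Qfin, γ g = 1) := by
    refine Finset.mem_filter.mpr ⟨Finset.mem_univ _, ?_, ?_⟩
    · rw [show g₀ * g₀⁻¹ = (1 : G) from mul_inv_cancel g₀, map_one, AlgEquiv.one_apply]
    · intro γ hγ
      refine hg₀ γ ?_
      simpa [hQfin] using hγ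
  have hN : ((Finset.univ.filter
      (fun g => D.φ (g * g₀⁻¹) e = e ∧ ∀ γ ∈ Qfin, γ g = 1)).card : K) ≠ 0 := by
    have := Finset.card_pos.mpr ⟨g₀, hg₀mem⟩
    exact Nat.cast_ne_zero.mpr this.ne'
  have hQne : ((Qfin.card : K)) ≠ 0 := by
    have h1mem : (1 : G →* Kˣ) ∈ Qfin := by
      simp only [hQfin, Finset.mem_filter, Finset.mem_univ, true_and]
      exact (mem_Qsub D e' 1).mp (Subgroup.one_mem _)
    have := Finset.card_pos.mpr ⟨1, h1mem⟩
    exact Nat.cast_ne_zero.mpr this.ne'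
  have hcG : ((Fintype.card G : K))⁻¹ ≠ 0 := by
    apply inv_ne_zero
    exact Nat.cast_ne_zero.mpr Fintype.card_ne_zero
  rcases mul_eq_zero.mp h with h' | h'
  · exact hcG h'
  · rcases mul_eq_zero.mp h' with h'' | h''
    · exact hN h''
    · exact hQne h''

end PartII

section PartIIb

variable {K : Type*} [Field K] [IsAlgClosed K] [CharZero K]
variable {G : Type*} [CommGroup G] [Fintype G] [Fintype (G →* Kˣ)]
variable {A : Type*} [CommRing A] [Algebra K A] [FiniteDimensional K A] [IsSemisimpleRing A]
variable (D : YetterDrinfeldHopf K G A)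

lemma cond2_to_cond3 {e e' : A} (he : IsPrimitiveIdempotent e) (he' : IsPrimitiveIdempotent e')
    (η η' : A →ₐ[K] K) (hη : η e = 1) (hη' : η' e' = 1)
    (h2 : ∀ g : G, (∀ γ : G →* Kˣ, D.ψ γ e' = e' → γ g = 1) → D.φ g e = e) :
    (Fintype.card G : K)⁻¹ •
        ∑ γ : G →* Kˣ, ∑ g : G, ((γ g : K))⁻¹ •
          ((η'.toLinearMap ∘ₗ (D.ψ γ).toLinearMap) ⊗ₜ[K]
            (η.toLinearMap ∘ₗ (D.φ g).toLinearMap)) =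
      η'.toLinearMap ⊗ₜ[K] η.toLinearMap := by
  classical
  apply pointwise_cond3
  intro x y
  -- F3-type consequences
  have hψfix : ∀ γ ∈ Qsub D e', ∀ z : A, η' (D.ψ γ z) = η' z := by
    intro γ hγ z
    have hval : (η'.comp (D.ψ γ).toAlgHom) e' = 1 := by
      show η' ((D.ψ γ).toAlgHom e') = 1
      rw [AlgEquiv.toAlgHom_eq_coe]
      show η' (D.ψ γ e') = 1
      rw [(mem_Qsub D e' γ).mp hγ, hη']
    have hchar := char_eq_of_prim he' (η'.comp (D.ψ γ).toAlgHom) η' hval hη'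
    have h := DFunLike.congr_fun hchar z
    simpa using h
  have hφfix : ∀ g ∈ perp K G (Qsub D e'), ∀ z : A, η (D.φ g z) = η z := by
    intro g hg z
    have hge : D.φ g e = e :=
      h2 g (fun γ hγ' => (mem_perp K G (Qsub D e') g).mp hg γ ((mem_Qsub D e' γ).mpr hγ'))
    have hval : (η.comp (D.φ g).toAlgHom) e = 1 := by
      show η ((D.φ g).toAlgHom e) = 1
      rw [AlgEquiv.toAlgHom_eq_coe]
      show η (D.φ g e) = 1
      rw [hge, hη]
    have hchar := char_eq_of_prim he (η.comp (D.φ g).toAlgHom) η hval hη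
    have h := DFunLike.congr_fun hchar z
    simpa using h
  -- finsets
  have hPmul : ∀ a ∈ Finset.univ.filter (fun g : G => g ∈ perp K G (Qsub D e')),
      ∀ b ∈ Finset.univ.filter (fun g : G => g ∈ perp K G (Qsub D e')),
      a * b ∈ Finset.univ.filter (fun g : G => g ∈ perp K G (Qsub D e')) := by
    intro a ha b hb
    simp only [Finset.mem_filter, Finset.mem_univ, true_and] at *
    exact Subgroup.mul_mem _ ha hb
  have hPinv : ∀ a ∈ Finset.univ.filter (fun g : G => g ∈ perp K G (Qsub D e')),
      a⁻¹ ∈ Finset.univ.filter (fun g : G => g ∈ perp K G (Qsub D e')) := by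
    intro a ha
    simp only [Finset.mem_filter, Finset.mem_univ, true_and] at *
    exact Subgroup.inv_mem _ ha
  -- vanishing off the perp
  have step1 : ∀ g : G, g ∉ perp K G (Qsub D e') →
      (∑ γ : G →* Kˣ, ((γ g : K))⁻¹ * η' (D.ψ γ x)) = 0 := by
    intro g hg
    have hex : ∃ β ∈ Qsub D e', β g ≠ 1 := by
      by_contra hc
      push_neg at hc
      exact hg ((mem_perp K G (Qsub D e') g).mpr hc)
    obtain ⟨β, hβQ, hβg⟩ := hex
    have hre : (∑ γ : G →* Kˣ, ((γ g : K))⁻¹ * η' (D.ψ γ x))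
        = ∑ γ : G →* Kˣ, (((β * γ) g : K))⁻¹ * η' (D.ψ (β * γ) x) :=
      (Fintype.sum_bijective (fun γ => β * γ) (Group.mulLeft_bijective β)
        (fun γ => (((β * γ) g : K))⁻¹ * η' (D.ψ (β * γ) x))
        (fun γ => ((γ g : K))⁻¹ * η' (D.ψ γ x)) (fun γ => rfl)).symm
    have hterm : ∀ γ : G →* Kˣ, (((β * γ) g : K))⁻¹ * η' (D.ψ (β * γ) x)
        = ((β g : K))⁻¹ * (((γ g : K))⁻¹ * η' (D.ψ γ x)) := by
      intro γ
      rw [map_mul, AlgEquiv.mul_apply, hψfix β hβQ, MonoidHom.mul_apply, Units.val_mul, mul_inv]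
      ring
    rw [Finset.sum_congr rfl (fun γ _ => hterm γ), ← Finset.mul_sum] at hre
    have hz : (1 - ((β g : K))⁻¹) * (∑ γ : G →* Kˣ, ((γ g : K))⁻¹ * η' (D.ψ γ x)) = 0 := by
      rw [sub_mul, one_mul, sub_eq_zero]
      exact hre
    rcases mul_eq_zero.mp hz with hz' | hz'
    · exfalso
      apply hβg
      have h1 : ((β g : K))⁻¹ = 1 := (sub_eq_zero.mp hz').symm
      exact Units.ext (by rwa [inv_eq_one] at h1)
    · exact hz'
  -- the main computation
  have hiff : ∀ γ : G →* Kˣ,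
      (∀ g ∈ Finset.univ.filter (fun g : G => g ∈ perp K G (Qsub D e')), γ g = 1)
        ↔ γ ∈ Qsub D e' := by
    intro γ
    constructor
    · intro hcond
      exact perp_perp K G (Qsub D e') γ
        (fun g hg => hcond g (Finset.mem_filter.mpr ⟨Finset.mem_univ _, hg⟩))
    · intro hγQ g hgmem
      exact (mem_perp K G (Qsub D e') g).mp (Finset.mem_filter.mp hgmem).2 γ hγQ
  have main : (∑ γ : G →* Kˣ, ∑ g : G, ((γ g : K))⁻¹ * (η' (D.ψ γ x) * η (D.φ g y)))
      = (((Finset.univ.filter (fun γ : G →* Kˣ => γ ∈ Qsub D e')).card : K)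
          * (((Finset.univ.filter (fun g : G => g ∈ perp K G (Qsub D e'))).card : K) * η' x))
        * η y := by
    rw [Finset.sum_comm]
    have e1 : ∀ g : G, (∑ γ : G →* Kˣ, ((γ g : K))⁻¹ * (η' (D.ψ γ x) * η (D.φ g y)))
        = (∑ γ : G →* Kˣ, ((γ g : K))⁻¹ * η' (D.ψ γ x)) * η (D.φ g y) := by
      intro g
      rw [Finset.sum_mul]
      exact Finset.sum_congr rfl fun γ _ => by ring
    rw [Finset.sum_congr rfl (fun g _ => e1 g)]
    have e2 : ∀ g : G, (∑ γ : G →* Kˣ, ((γ g : K))⁻¹ * η' (D.ψ γ x)) * η (D.φ g y)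
        = if g ∈ perp K G (Qsub D e')
            then (∑ γ : G →* Kˣ, ((γ g : K))⁻¹ * η' (D.ψ γ x)) * η y else 0 := by
      intro g
      by_cases hg : g ∈ perp K G (Qsub D e')
      · rw [if_pos hg, hφfix g hg y]
      · rw [if_neg hg, step1 g hg, zero_mul]
    rw [Finset.sum_congr rfl (fun g _ => e2 g), ← Finset.sum_filter, ← Finset.sum_mul,
      Finset.sum_comm]
    have e3 : ∀ γ : G →* Kˣ,
        (∑ g ∈ Finset.univ.filter (fun g : G => g ∈ perp K G (Qsub D e')),
          ((γ g : K))⁻¹ * η' (D.ψ γ x))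
        = if γ ∈ Qsub D e'
            then (((Finset.univ.filter (fun g : G => g ∈ perp K G (Qsub D e'))).card : K)
              * η' x) else 0 := by
      intro γ
      rw [← Finset.sum_mul, filter_char_sum _ hPmul hPinv γ]
      by_cases hγQ : γ ∈ Qsub D e'
      · rw [if_pos ((hiff γ).mpr hγQ), hψfix γ hγQ x, if_pos hγQ]
      · rw [if_neg (fun hc => hγQ ((hiff γ).mp hc)), zero_mul, if_neg hγQ]
    rw [Finset.sum_congr rfl (fun γ _ => e3 γ), ← Finset.sum_filter, Finset.sum_const,
      nsmul_eq_mul]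
  rw [main]
  -- cardinalities
  have hPcard : (Finset.univ.filter (fun g : G => g ∈ perp K G (Qsub D e'))).card
      = Nat.card (perp K G (Qsub D e')) := by
    rw [Nat.card_eq_fintype_card, Fintype.card_subtype]
  have hQcard : (Finset.univ.filter (fun γ : G →* Kˣ => γ ∈ Qsub D e')).card
      = Nat.card (Qsub D e') := by
    rw [Nat.card_eq_fintype_card, Fintype.card_subtype]
  have hcards : ((Finset.univ.filter (fun γ : G →* Kˣ => γ ∈ Qsub D e')).card : K)
      * ((Finset.univ.filter (fun g : G => g ∈ perp K G (Qsub D e'))).card : K)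
      = (Fintype.card G : K) := by
    rw [hPcard, hQcard, ← Nat.cast_mul, mul_comm (Nat.card (Qsub D e'))]
    rw [perp_card K G (Qsub D e'), Nat.card_eq_fintype_card]
  have hc0 : (Fintype.card G : K) ≠ 0 := Nat.cast_ne_zero.mpr Fintype.card_ne_zero
  calc (Fintype.card G : K)⁻¹
        * ((((Finset.univ.filter (fun γ : G →* Kˣ => γ ∈ Qsub D e')).card : K)
          * (((Finset.univ.filter (fun g : G => g ∈ perp K G (Qsub D e'))).card : K) * η' x))
          * η y)
      = ((((Finset.univ.filter (fun γ : G →* Kˣ => γ ∈ Qsub D e')).card : K)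
          * ((Finset.univ.filter (fun g : G => g ∈ perp K G (Qsub D e'))).card : K))
          * (Fintype.card G : K)⁻¹) * (η' x * η y) := by ring
    _ = η' x * η y := by
      rw [hcards, mul_inv_cancel₀ hc0, one_mul]

end PartIIb

end YDaux

/-- For primitive idempotents `e, e'`, the following are equivalent:
(1) the convolution product `η_e * η_{e'}` is an algebra homomorphism `A → K`;
(2) `Q_{e'}^⊥ ⊆ T_e`;
(3) the quasisymmetry fixes `η_e ⊗ η_{e'}` up to the flip. -/
theorem yd_character_product_tfae
    (K : Type*) [Field K] [IsAlgClosed K] [CharZero K]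
    (G : Type*) [CommGroup G] [Fintype G] [Fintype (G →* Kˣ)]
    (A : Type*) [CommRing A] [Algebra K A] [FiniteDimensional K A] [IsSemisimpleRing A]
    (D : YetterDrinfeldHopf K G A)
    (e e' : A) (he : IsPrimitiveIdempotent e) (he' : IsPrimitiveIdempotent e')
    (η η' : A →ₐ[K] K) (hη : η e = 1) (hη' : η' e' = 1) :
    ((∃ χ : A →ₐ[K] K, ∀ a : A, χ a =
        (TensorProduct.lid K K)
          ((TensorProduct.map η.toLinearMap η'.toLinearMap) (D.Δ a))) ↔
      (∀ g : G, (∀ γ : G →* Kˣ, D.ψ γ e' = e' → γ g = 1) → D.φ g e = e)) ∧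
    ((∀ g : G, (∀ γ : G →* Kˣ, D.ψ γ e' = e' → γ g = 1) → D.φ g e = e) ↔
      (Fintype.card G : K)⁻¹ •
        ∑ γ : G →* Kˣ, ∑ g : G, ((γ g : K))⁻¹ •
          ((η'.toLinearMap ∘ₗ (D.ψ γ).toLinearMap) ⊗ₜ[K]
            (η.toLinearMap ∘ₗ (D.φ g).toLinearMap)) =
      η'.toLinearMap ⊗ₜ[K] η.toLinearMap) := by
  refine ⟨⟨fun h1 => ?_, fun h2 => ?_⟩, fun h2 => ?_, fun h3 => ?_⟩
  · exact YDaux.cond3_to_cond2 D he he' η η' hη hη' (YDaux.cond1_to_cond3 D η η' h1)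
  · exact YDaux.cond3_to_cond1 D η η' (YDaux.cond2_to_cond3 D he he' η η' hη hη' h2)
  · exact YDaux.cond2_to_cond3 D he he' η η' hη hη' h2
  · exact YDaux.cond3_to_cond2 D he he' η η' hη hη' h3
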